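/- Let G(U, V; E) be a bipartite graph with parts of size n containing a perfect matching M, and fix an index i with 1 ≤ i ≤ n. Fix pairwise distinct prices p_j ∈ [1/e, 1] for all j ≠ i, let w be uniformly distributed on [0, 1], and set p_i = e^{w−1}. Then the expectation over w of r(v_i) + y(M(v_i)), where r and y are the revenue and utility in the greedy-by-price process on G with prices p_1, …, p_n and M(v_i) ∈ U is the vertex matched to v_i under M, is at least 1 − 1/e. -/

import Mathlib

open scoped Classical

noncomputable section

/-- The element of `c` minimizing `key`, if `c` is nonempty. -/
def pickMin {n : ℕ} {α : Type*} [LinearOrder α] (key : Fin n → α)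
    (c : Finset (Fin n)) : Option (Fin n) :=
  if h : c.Nonempty then some (Classical.choose (Finset.exists_min_image c key h)) else none

/-- The set of matched `V`-vertices after the first `j` arrivals of the online greedy
process on the bipartite graph with `U`-side arrival order `u_0, u_1, …` and adjacency
`adj`, in which each arriving `u_j` is matched to its currently unmatched neighbor
minimizing `key` (if any). -/
def greedyRun {n : ℕ} {α : Type*} [LinearOrder α] (adj : ℕ → Fin n → Prop)
    (key : Fin n → α) : ℕ → Finset (Fin n)
  | 0 => ∅
  | j + 1 =>
    match pickMin key ((Finset.univ.filter fun i => adj j i) \ greedyRun adj key j) with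
    | some v => insert v (greedyRun adj key j)
    | none => greedyRun adj key j

/-- The `V`-vertex that the arriving vertex `u_j` (0-indexed) gets matched to, if any. -/
def greedyMatchU {n : ℕ} {α : Type*} [LinearOrder α] (adj : ℕ → Fin n → Prop)
    (key : Fin n → α) (j : ℕ) : Option (Fin n) :=
  pickMin key ((Finset.univ.filter fun i => adj j i) \ greedyRun adj key j)

/-- Adjacency of the monotone graph `MonotoneG` (0-indexed):
`u_j` is adjacent to `v_i` iff `j ≤ i`. -/
def monoAdj (n : ℕ) : ℕ → Fin n → Prop := fun j i => j ≤ (i : ℕ)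

/-- The set of matched `V`-vertices produced by the Ranking greedy process on `MonotoneG`
with permutation `π` (where `π i` is the rank of `v_i`, 0-indexed). -/
def rankMatched (n : ℕ) (π : Equiv.Perm (Fin n)) : Finset (Fin n) :=
  greedyRun (monoAdj n) (fun i => π i) n

/-- `x(π)`: the number of edges of the matching produced by Ranking on `MonotoneG`. -/
def xSize (n : ℕ) (π : Equiv.Perm (Fin n)) : ℕ := (rankMatched n π).card

/-- `a(n) = Σ_π x(π)`, over all `n!` permutations. -/
def aVal (n : ℕ) : ℕ := ∑ π : Equiv.Perm (Fin n), xSize n π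

/-- `a(n,i)` (with `i` 1-indexed): the number of permutations `π` of `{1,…,n}` for which
the vertex of rank `i` under `π` is matched by the Ranking greedy process on `MonotoneG`. -/
def aIdx (n i : ℕ) : ℕ :=
  (Finset.univ.filter fun π : Equiv.Perm (Fin n) =>
    ∃ v : Fin n, (π v : ℕ) = i - 1 ∧ v ∈ rankMatched n π).card

/-- `d(m,i)` (with `i` 1-indexed): the number of permutations of `{1,…,m}` all of whose
fixed points (if any) lie among the first `i` items. -/
def dIdx (m i : ℕ) : ℕ :=
  (Finset.univ.filter fun σ : Equiv.Perm (Fin m) => ∀ x, σ x = x → (x : ℕ) < i).card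

/-- `d(m)`: the number of derangements of `{1,…,m}`. -/
def numDer (m : ℕ) : ℕ :=
  (Finset.univ.filter fun σ : Equiv.Perm (Fin m) => ∀ x, σ x ≠ x).card

/-- The key for the greedy-by-price process: buy the cheapest available item,
breaking ties in favor of the smaller index. -/
def priceKey {n : ℕ} (p : Fin n → ℝ) : Fin n → Lex (ℝ × ℕ) := fun i => toLex (p i, (i : ℕ))

/-- The utility `y(u_j)` of buyer `u_j` (0-indexed) in the greedy-by-price process:
`1 - p v` if `u_j` buys item `v`, and `0` if `u_j` remains unmatched. -/
def utility (n : ℕ) (adj : ℕ → Fin n → Prop) (p : Fin n → ℝ) (j : ℕ) : ℝ :=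
  (greedyMatchU adj (priceKey p) j).elim 0 (fun v => 1 - p v)

/-- The revenue `r(v)` from item `v` in the greedy-by-price process:
`p v` if `v` is sold, and `0` otherwise. -/
def revenue (n : ℕ) (adj : ℕ → Fin n → Prop) (p : Fin n → ℝ) (v : Fin n) : ℝ :=
  if v ∈ greedyRun adj (priceKey p) n then p v else 0

/-- The `m`-th harmonic number `H_m = Σ_{i=1}^m 1/i` (with `H_0 = 0`). -/
def harm (m : ℕ) : ℝ := ∑ i ∈ Finset.range m, (1 : ℝ) / (i + 1)

variable {n : ℕ} {α : Type*} [LinearOrder α]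

lemma pickMin_spec {key : Fin n → α} {c : Finset (Fin n)} {v : Fin n}
    (h : pickMin key c = some v) : v ∈ c ∧ ∀ u ∈ c, key v ≤ key u := by
  unfold pickMin at h
  split at h
  · rename_i hne
    obtain ⟨h1, h2⟩ := Classical.choose_spec (Finset.exists_min_image c key hne)
    cases h; exact ⟨h1, h2⟩
  · cases h

lemma pickMin_eq_none_iff {key : Fin n → α} {c : Finset (Fin n)} :
    pickMin key c = none ↔ c = ∅ := by
  unfold pickMin
  split
  · rename_i hne
    simp [Finset.nonempty_iff_ne_empty.mp hne]
  · rename_i hne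
    simp [Finset.not_nonempty_iff_eq_empty.mp hne]

lemma pickMin_eq_some {key : Fin n → α} (hinj : Function.Injective key)
    {c : Finset (Fin n)} {v : Fin n} (hv : v ∈ c) (hmin : ∀ u ∈ c, key v ≤ key u) :
    pickMin key c = some v := by
  have hne : c.Nonempty := ⟨v, hv⟩
  cases hpick : pickMin key c with
  | none => rw [pickMin_eq_none_iff] at hpick; simp [hpick] at hv
  | some w =>
    obtain ⟨hw, hwmin⟩ := pickMin_spec hpick
    have := le_antisymm (hwmin v hv) (hmin w hw)
    rw [hinj this]
    try exact hpick

lemma greedyRun_succ (adj : ℕ → Fin n → Prop) (key : Fin n → α) (j : ℕ) :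
    greedyRun adj key (j + 1) =
      match greedyMatchU adj key j with
      | some v => insert v (greedyRun adj key j)
      | none => greedyRun adj key j := rfl

lemma greedyRun_subset_succ (adj : ℕ → Fin n → Prop) (key : Fin n → α) (j : ℕ) :
    greedyRun adj key j ⊆ greedyRun adj key (j + 1) := by
  rw [greedyRun_succ]
  cases greedyMatchU adj key j with
  | some v => exact Finset.subset_insert _ _
  | none => exact subset_rfl

lemma greedyRun_mono (adj : ℕ → Fin n → Prop) (key : Fin n → α) {j k : ℕ} (h : j ≤ k) :
    greedyRun adj key j ⊆ greedyRun adj key k := by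
  induction k with
  | zero => simp_all
  | succ k ih =>
    rcases Nat.lt_or_ge j (k+1) with h' | h'
    · exact (ih (Nat.lt_succ_iff.mp h')).trans (greedyRun_subset_succ adj key k)
    · have : j = k + 1 := le_antisymm h h'
      subst this; exact subset_rfl

lemma mem_greedyRun_of_matchU {adj : ℕ → Fin n → Prop} {key : Fin n → α} {j : ℕ} {v : Fin n}
    (h : greedyMatchU adj key j = some v) : v ∈ greedyRun adj key (j + 1) := by
  rw [greedyRun_succ, h]; exact Finset.mem_insert_self _ _
section Congr
variable {n : ℕ} {α β : Type*} [LinearOrder α] [LinearOrder β]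
variable {adj : ℕ → Fin n → Prop} {κ₁ : Fin n → α} {κ₂ : Fin n → β}

lemma pickMin_congr (h1 : Function.Injective κ₁) (h2 : Function.Injective κ₂)
    {c : Finset (Fin n)} (h : ∀ a ∈ c, ∀ b ∈ c, κ₁ a ≤ κ₁ b ↔ κ₂ a ≤ κ₂ b) :
    pickMin κ₁ c = pickMin κ₂ c := by
  cases hpick : pickMin κ₁ c with
  | none =>
    rw [pickMin_eq_none_iff] at hpick
    rw [eq_comm, pickMin_eq_none_iff]; exact hpick
  | some v =>
    obtain ⟨hv, hmin⟩ := pickMin_spec hpick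
    exact (pickMin_eq_some h2 hv (fun u hu => (h v hv u hu).mp (hmin u hu))).symm

lemma greedyRun_matchU_congr (h1 : Function.Injective κ₁) (h2 : Function.Injective κ₂)
    (h : ∀ a b, (∃ j, adj j a) → (∃ j, adj j b) → (κ₁ a ≤ κ₁ b ↔ κ₂ a ≤ κ₂ b)) :
    ∀ j, greedyRun adj κ₁ j = greedyRun adj κ₂ j ∧
      greedyMatchU adj κ₁ j = greedyMatchU adj κ₂ j := by
  have key : ∀ j, greedyRun adj κ₁ j = greedyRun adj κ₂ j →
      greedyMatchU adj κ₁ j = greedyMatchU adj κ₂ j := by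
    intro j hrun
    unfold greedyMatchU
    rw [← hrun]
    apply pickMin_congr h1 h2
    intro a ha b hb
    rw [Finset.mem_sdiff, Finset.mem_filter] at ha hb
    exact h a b ⟨j, ha.1.2⟩ ⟨j, hb.1.2⟩
  intro j
  induction j with
  | zero => exact ⟨rfl, key 0 rfl⟩
  | succ j ih =>
    have hm := key j ih.1
    have hrun : greedyRun adj κ₁ (j+1) = greedyRun adj κ₂ (j+1) := by
      rw [greedyRun_succ, greedyRun_succ, hm, ih.1]
    exact ⟨hrun, key (j+1) hrun⟩

end Congr
section Succ
variable {n : ℕ} {α : Type*} [LinearOrder α] {adj : ℕ → Fin n → Prop} {key : Fin n → α}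

lemma greedyRun_succ_some {j : ℕ} {v : Fin n} (h : greedyMatchU adj key j = some v) :
    greedyRun adj key (j + 1) = insert v (greedyRun adj key j) := by
  rw [greedyRun_succ, h]

lemma greedyRun_succ_none {j : ℕ} (h : greedyMatchU adj key j = none) :
    greedyRun adj key (j + 1) = greedyRun adj key j := by
  rw [greedyRun_succ, h]

lemma greedyMatchU_def (j : ℕ) :
    greedyMatchU adj key j =
      pickMin key ((Finset.univ.filter fun i => adj j i) \ greedyRun adj key j) := rfl

end Succ

section Mono
variable {n : ℕ} {α : Type*} [LinearOrder α]
variable {adj : ℕ → Fin n → Prop} {κ₁ κ₂ : Fin n → α}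

/-- Lowering the key of `i` (keeping all other keys): either the runs agree,
or `i` is matched in the lowered run. -/
lemma greedyRun_lower_key (h1 : Function.Injective κ₁) (h2 : Function.Injective κ₂)
    {i : Fin n} (hoff : ∀ a, a ≠ i → κ₁ a = κ₂ a) (hi : κ₂ i < κ₁ i) :
    ∀ j, greedyRun adj κ₁ j = greedyRun adj κ₂ j ∨ i ∈ greedyRun adj κ₂ j := by
  intro j
  induction j with
  | zero => exact Or.inl rfl
  | succ j ih =>
    rcases ih with hR | hmem
    · set c := (Finset.univ.filter fun v => adj j v) \ greedyRun adj κ₁ j with hc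
      have hm1 : greedyMatchU adj κ₁ j = pickMin κ₁ c := rfl
      have hm2 : greedyMatchU adj κ₂ j = pickMin κ₂ c := by
        rw [greedyMatchU_def, hc, hR]
      cases hpick : pickMin κ₂ c with
      | none =>
        left
        have h1' : pickMin κ₁ c = none := by
          rw [pickMin_eq_none_iff] at hpick ⊢; exact hpick
        rw [greedyRun_succ_none (hm1.trans h1'), greedyRun_succ_none (hm2.trans hpick), hR]
      | some v =>
        obtain ⟨hv, hmin⟩ := pickMin_spec hpick
        by_cases hvi : v = i
        · right
          rw [greedyRun_succ_some (hm2.trans hpick), hvi]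
          exact Finset.mem_insert_self _ _
        · left
          have hpick1 : pickMin κ₁ c = some v := by
            apply pickMin_eq_some h1 hv
            intro u hu
            by_cases hui : u = i
            · subst hui
              calc κ₁ v = κ₂ v := hoff v hvi
                _ ≤ κ₂ u := hmin u hu
                _ ≤ κ₁ u := hi.le
            · rw [hoff v hvi, hoff u hui]; exact hmin u hu
          rw [greedyRun_succ_some (hm1.trans hpick1), greedyRun_succ_some (hm2.trans hpick), hR]
    · exact Or.inr (greedyRun_subset_succ adj κ₂ j hmem)

end Mono
section Unsold
variable {n : ℕ} {α : Type*} [LinearOrder α]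
variable {adj : ℕ → Fin n → Prop} {κ : Fin n → α} {i : Fin n}

lemma unsold_step (hinj : Function.Injective κ) {j : ℕ}
    (hrun : greedyRun adj κ j = greedyRun (fun j v => adj j v ∧ v ≠ i) κ j)
    (hni : i ∉ greedyRun adj κ (j + 1)) :
    greedyMatchU adj κ j = greedyMatchU (fun j v => adj j v ∧ v ≠ i) κ j ∧
      greedyRun adj κ (j + 1) = greedyRun (fun j v => adj j v ∧ v ≠ i) κ (j + 1) := by
  have hm1 : greedyMatchU adj κ j
      = pickMin κ ((Finset.univ.filter fun v => adj j v) \ greedyRun adj κ j) := rfl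
  have hm2 : greedyMatchU (fun j v => adj j v ∧ v ≠ i) κ j
      = pickMin κ (((Finset.univ.filter fun v => adj j v) \ greedyRun adj κ j).erase i) := by
    rw [greedyMatchU_def]
    congr 1
    rw [← hrun]
    ext a
    simp only [Finset.mem_sdiff, Finset.mem_erase, Finset.mem_filter, Finset.mem_univ,
      true_and]
    tauto
  cases hpick : pickMin κ ((Finset.univ.filter fun v => adj j v) \ greedyRun adj κ j) with
  | none =>
    rw [pickMin_eq_none_iff] at hpick
    have h2 : pickMin κ (((Finset.univ.filter fun v => adj j v)
        \ greedyRun adj κ j).erase i) = none := by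
      rw [pickMin_eq_none_iff, hpick, Finset.erase_empty]
    refine ⟨by rw [hm1, hm2, h2, pickMin_eq_none_iff.mpr hpick], ?_⟩
    rw [greedyRun_succ_none (hm1.trans (pickMin_eq_none_iff.mpr hpick)),
      greedyRun_succ_none (hm2.trans h2), hrun]
  | some v =>
    obtain ⟨hv, hmin⟩ := pickMin_spec hpick
    have hvi : v ≠ i := by
      intro h
      apply hni
      rw [greedyRun_succ_some (hm1.trans hpick), h]
      exact Finset.mem_insert_self _ _
    have h2 : pickMin κ (((Finset.univ.filter fun v => adj j v)
        \ greedyRun adj κ j).erase i) = some v := by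
      apply pickMin_eq_some hinj (Finset.mem_erase.mpr ⟨hvi, hv⟩)
      exact fun u hu => hmin u (Finset.erase_subset _ _ hu)
    refine ⟨by rw [hm1, hm2, hpick, h2], ?_⟩
    rw [greedyRun_succ_some (hm1.trans hpick), greedyRun_succ_some (hm2.trans h2), hrun]

lemma unsold_run_eq (hinj : Function.Injective κ) {N : ℕ}
    (hns : i ∉ greedyRun adj κ N) :
    ∀ j ≤ N, greedyRun adj κ j = greedyRun (fun j v => adj j v ∧ v ≠ i) κ j := by
  intro j hj
  induction j with
  | zero => rfl
  | succ j ih =>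
    have hrun := ih (Nat.le_of_succ_le hj)
    exact (unsold_step hinj hrun
      (fun h => hns (greedyRun_mono adj κ hj h))).2

lemma unsold_matchU_eq (hinj : Function.Injective κ) {N : ℕ}
    (hns : i ∉ greedyRun adj κ N) {j : ℕ} (hj : j < N) :
    greedyMatchU adj κ j = greedyMatchU (fun j v => adj j v ∧ v ≠ i) κ j :=
  (unsold_step hinj (unsold_run_eq hinj hns j hj.le)
    (fun h => hns (greedyRun_mono adj κ hj h))).1

end Unsold
section MatchChar
variable {n : ℕ} {α : Type*} [LinearOrder α] {κ : Fin n → α}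

lemma matchU_eq_some_iff (hinj : Function.Injective κ) {ad : ℕ → Fin n → Prop}
    {j : ℕ} {v : Fin n} :
    greedyMatchU ad κ j = some v ↔
      (ad j v ∧ v ∉ greedyRun ad κ j) ∧
        ∀ u, ad j u → u ∉ greedyRun ad κ j → κ v ≤ κ u := by
  constructor
  · intro h
    obtain ⟨hv, hmin⟩ := pickMin_spec h
    simp only [Finset.mem_sdiff, Finset.mem_filter, Finset.mem_univ, true_and] at hv
    refine ⟨hv, fun u hu hnu => hmin u ?_⟩
    simp only [Finset.mem_sdiff, Finset.mem_filter, Finset.mem_univ, true_and]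
    exact ⟨hu, hnu⟩
  · rintro ⟨⟨h1, h2⟩, hmin⟩
    rw [greedyMatchU_def]
    apply pickMin_eq_some hinj
    · simp only [Finset.mem_sdiff, Finset.mem_filter, Finset.mem_univ, true_and]
      exact ⟨h1, h2⟩
    · intro u hu
      simp only [Finset.mem_sdiff, Finset.mem_filter, Finset.mem_univ, true_and] at hu
      exact hmin u hu.1 hu.2

lemma matchU_eq_none_iff {ad : ℕ → Fin n → Prop} {j : ℕ} :
    greedyMatchU ad κ j = none ↔ ∀ u, ad j u → u ∈ greedyRun ad κ j := by
  rw [greedyMatchU_def, pickMin_eq_none_iff, Finset.eq_empty_iff_forall_notMem]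
  constructor
  · intro h u hu
    by_contra hnu
    apply h u
    simp only [Finset.mem_sdiff, Finset.mem_filter, Finset.mem_univ, true_and]
    exact ⟨hu, hnu⟩
  · intro h u hu
    simp only [Finset.mem_sdiff, Finset.mem_filter, Finset.mem_univ, true_and] at hu
    exact hu.2 (h u hu.1)

lemma i_not_mem_runB {adj : ℕ → Fin n → Prop} {i : Fin n} :
    ∀ j, i ∉ greedyRun (fun j v => adj j v ∧ v ≠ i) κ j := by
  intro j
  induction j with
  | zero => simp [greedyRun]
  | succ j ih =>
    cases h : greedyMatchU (fun j v => adj j v ∧ v ≠ i) κ j with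
    | none => rw [greedyRun_succ_none h]; exact ih
    | some v =>
      have hv := (pickMin_spec h).1
      simp only [Finset.mem_sdiff, Finset.mem_filter, Finset.mem_univ, true_and] at hv
      obtain ⟨⟨_, hvi⟩, _⟩ := hv
      rw [greedyRun_succ_some h]
      intro hmem
      rcases Finset.mem_insert.mp hmem with h' | h'
      · exact hvi h'.symm
      · exact ih h'

end MatchChar
section Dom
variable {n : ℕ} {α : Type*} [LinearOrder α]
variable {adj : ℕ → Fin n → Prop} {κ : Fin n → α} {q : Fin n → ℝ} {i : Fin n}

/-- Invariant relating the greedy run on the full graph and on the graph with item `i`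
removed. -/
def domInv {n : ℕ} {α : Type*} [LinearOrder α] (adj : ℕ → Fin n → Prop)
    (κ : Fin n → α) (i : Fin n) (j : ℕ) : Prop :=
  greedyRun adj κ j = greedyRun (fun j v => adj j v ∧ v ≠ i) κ j
  ∨ greedyRun adj κ j = insert i (greedyRun (fun j v => adj j v ∧ v ≠ i) κ j)
  ∨ ∃ T a, i ∉ T ∧ a ∉ T ∧ a ≠ i ∧ greedyRun adj κ j = insert i T ∧
      greedyRun (fun j v => adj j v ∧ v ≠ i) κ j = insert a T ∧ κ i < κ a

lemma dominance_step (hinj : Function.Injective κ) (hq1 : ∀ v, q v ≤ 1)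
    (hord : ∀ a b, κ a ≤ κ b → q a ≤ q b) (j : ℕ) (hInv : domInv adj κ i j) :
    domInv adj κ i (j + 1) ∧
      ((greedyMatchU (fun j v => adj j v ∧ v ≠ i) κ j).elim 0 (fun v => 1 - q v) : ℝ)
        ≤ (greedyMatchU adj κ j).elim 0 (fun v => 1 - q v) := by
  have hiB := i_not_mem_runB (adj := adj) (i := i) (κ := κ)
  rcases hInv with hR | hR | ⟨T, a, hiT, haT, hai, hRA, hRB, hlt⟩
  · -- Case 1: equal runs
    cases hA : greedyMatchU adj κ j with
    | none =>
      rw [matchU_eq_none_iff] at hA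
      have hB : greedyMatchU (fun j v => adj j v ∧ v ≠ i) κ j = none := by
        rw [matchU_eq_none_iff]
        exact fun u hu => hR ▸ hA u hu.1
      refine ⟨Or.inl ?_, by simp [hB, matchU_eq_none_iff.mpr hA]⟩
      rw [greedyRun_succ_none (matchU_eq_none_iff.mpr hA), greedyRun_succ_none hB, hR]
    | some v =>
      obtain ⟨⟨hadj, hnv⟩, hmin⟩ := (matchU_eq_some_iff hinj).mp hA
      by_cases hvi : v = i
      · subst hvi
        cases hB : greedyMatchU (fun j v' => adj j v' ∧ v' ≠ v) κ j with
        | none =>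
          refine ⟨Or.inr (Or.inl ?_), ?_⟩
          · rw [greedyRun_succ_some hA, greedyRun_succ_none hB, hR]
          · simp only [hA, hB, Option.elim]
            have := hq1 v; linarith
        | some a =>
          obtain ⟨⟨⟨hadja, hane⟩, hna⟩, hminB⟩ := (matchU_eq_some_iff hinj).mp hB
          have hκ : κ v < κ a := by
            refine lt_of_le_of_ne (hmin a hadja (hR ▸ hna)) (fun h => hane (hinj h).symm)
          refine ⟨Or.inr (Or.inr ⟨greedyRun (fun j v' => adj j v' ∧ v' ≠ v) κ j, a,
            hiB j, hna, hane, ?_, ?_, hκ⟩), ?_⟩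
          · rw [greedyRun_succ_some hA, hR]
          · rw [greedyRun_succ_some hB]
          · simp only [hA, hB, Option.elim]
            have := hord _ _ hκ.le; linarith
      · have hB : greedyMatchU (fun j v' => adj j v' ∧ v' ≠ i) κ j = some v := by
          rw [matchU_eq_some_iff hinj]
          exact ⟨⟨⟨hadj, hvi⟩, hR ▸ hnv⟩, fun u hu hnu => hmin u hu.1 (hR ▸ hnu)⟩
        refine ⟨Or.inl ?_, by simp [hA, hB]⟩
        rw [greedyRun_succ_some hA, greedyRun_succ_some hB, hR]
  · -- Case 2: A = B ∪ {i}
    have hiBj := hiB j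
    cases hB : greedyMatchU (fun j v => adj j v ∧ v ≠ i) κ j with
    | none =>
      have hB' := matchU_eq_none_iff.mp hB
      have hA : greedyMatchU adj κ j = none := by
        rw [matchU_eq_none_iff]
        intro u hu
        rw [hR]
        by_cases hui : u = i
        · subst hui; exact Finset.mem_insert_self _ _
        · exact Finset.mem_insert_of_mem (hB' u ⟨hu, hui⟩)
      refine ⟨Or.inr (Or.inl ?_), by simp [hA, hB]⟩
      rw [greedyRun_succ_none hA, greedyRun_succ_none hB, hR]
    | some v =>
      obtain ⟨⟨⟨hadj, hvi⟩, hnv⟩, hminB⟩ := (matchU_eq_some_iff hinj).mp hB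
      have hA : greedyMatchU adj κ j = some v := by
        rw [matchU_eq_some_iff hinj]
        refine ⟨⟨hadj, ?_⟩, fun u hu hnu => ?_⟩
        · rw [hR]
          simp only [Finset.mem_insert]
          push_neg
          exact ⟨hvi, hnv⟩
        · rw [hR] at hnu
          simp only [Finset.mem_insert] at hnu
          push_neg at hnu
          exact hminB u ⟨hu, hnu.1⟩ hnu.2
      refine ⟨Or.inr (Or.inl ?_), by simp [hA, hB]⟩
      rw [greedyRun_succ_some hA, greedyRun_succ_some hB, hR, Finset.insert_comm]
  · -- Case 3: swap state
    have hnotA : ∀ u : Fin n, u ∉ insert i T → u ∉ greedyRun adj κ j := by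
      intro u hu; rw [hRA]; exact hu
    cases hA : greedyMatchU adj κ j with
    | none =>
      rw [matchU_eq_none_iff] at hA
      have hB : greedyMatchU (fun j v => adj j v ∧ v ≠ i) κ j = none := by
        rw [matchU_eq_none_iff]
        intro u hu
        have := hA u hu.1
        rw [hRA] at this
        rw [hRB]
        rcases Finset.mem_insert.mp this with h' | h'
        · exact absurd h' hu.2
        · exact Finset.mem_insert_of_mem h'
      refine ⟨Or.inr (Or.inr ⟨T, a, hiT, haT, hai, ?_, ?_, hlt⟩),
        by simp [hB, matchU_eq_none_iff.mpr hA]⟩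
      · rw [greedyRun_succ_none (matchU_eq_none_iff.mpr hA), hRA]
      · rw [greedyRun_succ_none hB, hRB]
    | some v =>
      obtain ⟨⟨hadj, hnv⟩, hminA⟩ := (matchU_eq_some_iff hinj).mp hA
      rw [hRA] at hnv
      simp only [Finset.mem_insert] at hnv
      push_neg at hnv
      obtain ⟨hvi, hvT⟩ := hnv
      by_cases hva : v = a
      · subst hva
        cases hB : greedyMatchU (fun j v' => adj j v' ∧ v' ≠ i) κ j with
        | none =>
          refine ⟨Or.inr (Or.inl ?_), ?_⟩
          · rw [greedyRun_succ_some hA, greedyRun_succ_none hB, hRA, hRB,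
              Finset.insert_comm]
          · simp only [hA, hB, Option.elim]
            have := hq1 v; linarith
        | some x =>
          obtain ⟨⟨⟨hadjx, hxi⟩, hnx⟩, hminB⟩ := (matchU_eq_some_iff hinj).mp hB
          rw [hRB] at hnx
          simp only [Finset.mem_insert] at hnx
          push_neg at hnx
          obtain ⟨hxa, hxT⟩ := hnx
          have hax : κ v ≤ κ x := by
            apply hminA x hadjx
            apply hnotA
            simp only [Finset.mem_insert]
            push_neg
            exact ⟨hxi, hxT⟩
          refine ⟨Or.inr (Or.inr ⟨insert v T, x, ?_, ?_, hxi, ?_, ?_, lt_of_lt_of_le hlt hax⟩), ?_⟩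
          · simp only [Finset.mem_insert]
            push_neg
            exact ⟨fun h => hai h.symm, hiT⟩
          · simp only [Finset.mem_insert]
            push_neg
            exact ⟨hxa, hxT⟩
          · rw [greedyRun_succ_some hA, hRA, Finset.insert_comm]
          · rw [greedyRun_succ_some hB, hRB]
          · simp only [hA, hB, Option.elim]
            have := hord _ _ hax; linarith
      · have hB : greedyMatchU (fun j v' => adj j v' ∧ v' ≠ i) κ j = some v := by
          rw [matchU_eq_some_iff hinj]
          refine ⟨⟨⟨hadj, hvi⟩, ?_⟩, fun u hu hnu => ?_⟩
          · rw [hRB]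
            simp only [Finset.mem_insert]
            push_neg
            exact ⟨hva, hvT⟩
          · rw [hRB] at hnu
            simp only [Finset.mem_insert] at hnu
            push_neg at hnu
            apply hminA u hu.1
            apply hnotA
            simp only [Finset.mem_insert]
            push_neg
            exact ⟨hu.2, hnu.2⟩
        refine ⟨Or.inr (Or.inr ⟨insert v T, a, ?_, ?_, hai, ?_, ?_, hlt⟩),
          by simp [hA, hB]⟩
        · simp only [Finset.mem_insert]
          push_neg
          exact ⟨fun h => hvi h.symm, hiT⟩
        · simp only [Finset.mem_insert]
          push_neg
          exact ⟨fun h => hva h.symm, haT⟩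
        · rw [greedyRun_succ_some hA, hRA, Finset.insert_comm]
        · rw [greedyRun_succ_some hB, hRB, Finset.insert_comm]

lemma dominance (hinj : Function.Injective κ) (hq1 : ∀ v, q v ≤ 1)
    (hord : ∀ a b, κ a ≤ κ b → q a ≤ q b) (j : ℕ) :
    ((greedyMatchU (fun j v => adj j v ∧ v ≠ i) κ j).elim 0 (fun v => 1 - q v) : ℝ)
      ≤ (greedyMatchU adj κ j).elim 0 (fun v => 1 - q v) := by
  have hInv : ∀ k, domInv adj κ i k := by
    intro k
    induction k with
    | zero => exact Or.inl rfl
    | succ k ih => exact (dominance_step hinj hq1 hord k ih).1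
  exact (dominance_step hinj hq1 hord j (hInv j)).2

end Dom
instance : Fintype Ordering :=
  ⟨{Ordering.lt, Ordering.eq, Ordering.gt}, by intro x; cases x <;> simp⟩
section PriceKey
variable {n : ℕ}

lemma priceKey_injective (q : Fin n → ℝ) : Function.Injective (priceKey q) := by
  intro a b h
  have := (congrArg (fun z => (ofLex z).2) h)
  simpa [priceKey] using Fin.ext this

lemma priceKey_mono {q : Fin n → ℝ} {a b : Fin n} (h : priceKey q a ≤ priceKey q b) :
    q a ≤ q b := by
  rcases (Prod.Lex.le_iff).mp h with h' | h'
  · exact h'.le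
  · exact h'.1.le

end PriceKey

section Meas

lemma measurableSet_of_cmp_invariant {m : ℕ} (g : Fin m → ℝ) (P : ℝ → Prop)
    (hP : ∀ x y : ℝ, (∀ j, cmp x (g j) = cmp y (g j)) → P x → P y) :
    MeasurableSet {x | P x} := by
  have hrw : {x | P x} = ⋃ (o : Fin m → Ordering)
      (_ : ∃ z, P z ∧ ∀ j, cmp z (g j) = o j), {x | ∀ j, cmp x (g j) = o j} := by
    ext x
    simp only [Set.mem_iUnion, Set.mem_setOf_eq]
    constructor
    · intro hx
      exact ⟨fun j => cmp x (g j), ⟨x, hx, fun j => rfl⟩, fun j => rfl⟩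
    · rintro ⟨o, ⟨z, hz, hzo⟩, hxo⟩
      exact hP z x (fun j => (hzo j).trans (hxo j).symm) hz
  rw [hrw]
  refine MeasurableSet.iUnion fun o => MeasurableSet.iUnion fun _ => ?_
  have : {x : ℝ | ∀ j, cmp x (g j) = o j} = ⋂ j, {x | cmp x (g j) = o j} := by
    ext x; simp
  rw [this]
  refine MeasurableSet.iInter fun j => ?_
  cases o j with
  | lt =>
    have : {x : ℝ | cmp x (g j) = Ordering.lt} = Set.Iio (g j) := by
      ext x; simp [cmp_eq_lt_iff]
    rw [this]; exact measurableSet_Iio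
  | eq =>
    have : {x : ℝ | cmp x (g j) = Ordering.eq} = {g j} := by
      ext x; simp [cmp_eq_eq_iff]
    rw [this]; exact measurableSet_singleton _
  | gt =>
    have : {x : ℝ | cmp x (g j) = Ordering.gt} = Set.Ioi (g j) := by
      ext x; simp [cmp_eq_gt_iff]
    rw [this]; exact measurableSet_Ioi
end Meas

/-- Let `G(U,V;E)` be a bipartite graph with parts of size `n` (vertex `u_j` of `U` is
0-indexed by the arrival step `j < n`) containing a perfect matching `M` (where `M v` is
the `U`-vertex matched to `v`), and fix an index `i`. Fix pairwise distinct prices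
`p j ∈ [1/e, 1]` for all `j ≠ i`, let `w` be uniformly distributed on `[0,1]` and set
`p i = e^{w−1}`. Then the expectation over `w` of `r(v_i) + y(M(v_i))`, where `r` and `y`
are the revenue and utility in the greedy-by-price process on `G`, is at least
`1 − 1/e`. -/
theorem stmt_18 (n : ℕ) (adj : ℕ → Fin n → Prop) (p : Fin n → ℝ) (i : Fin n)
    (hp1 : ∀ j, j ≠ i → 1 / Real.exp 1 ≤ p j ∧ p j ≤ 1)
    (hp2 : ∀ j k, j ≠ i → k ≠ i → j ≠ k → p j ≠ p k)
    (M : Equiv.Perm (Fin n)) (hM : ∀ v : Fin n, adj ((M v : Fin n) : ℕ) v) :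
    1 - 1 / Real.exp 1 ≤
      ∫ w in (0 : ℝ)..1,
        (revenue n adj (Function.update p i (Real.exp (w - 1))) i +
         utility n adj (Function.update p i (Real.exp (w - 1))) ((M i : Fin n) : ℕ)) := by
  classical
  have hm_lt : ((M i : Fin n) : ℕ) < n := (M i).isLt
  have hadji : adj ((M i : Fin n) : ℕ) i := hM i
  have hup_i : ∀ x : ℝ, Function.update p i x i = x := fun x => Function.update_self i x p
  have hup_ne : ∀ (x : ℝ) (v : Fin n), v ≠ i → Function.update p i x v = p v :=
    fun x v hv => Function.update_of_ne hv x p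
  have hkey_ne : ∀ (x y : ℝ) (v : Fin n), v ≠ i →
      priceKey (Function.update p i x) v = priceKey (Function.update p i y) v := by
    intro x y v hv
    simp [priceKey, hup_ne _ _ hv]
  -- order invariance
  have horder : ∀ x y : ℝ, (∀ j, cmp x (p j) = cmp y (p j)) →
      ∀ a b : Fin n,
        priceKey (Function.update p i x) a ≤ priceKey (Function.update p i x) b ↔
        priceKey (Function.update p i y) a ≤ priceKey (Function.update p i y) b := by
    intro x y hcmp a b
    have hlt : ∀ j, x < p j ↔ y < p j := fun j => by
      rw [← cmp_eq_lt_iff x (p j), hcmp j, cmp_eq_lt_iff]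
    have heq : ∀ j, x = p j ↔ y = p j := fun j => by
      rw [← cmp_eq_eq_iff x (p j), hcmp j, cmp_eq_eq_iff]
    have hgt : ∀ j, p j < x ↔ p j < y := fun j => by
      rw [← cmp_eq_gt_iff x (p j), hcmp j, cmp_eq_gt_iff]
    by_cases hai : a = i <;> by_cases hbi : b = i
    · subst hai; subst hbi; simp
    · subst hai
      simp only [priceKey]
      rw [Prod.Lex.le_iff, Prod.Lex.le_iff]
      simp only [hup_i, hup_ne _ _ hbi, ofLex_toLex]
      rw [hlt b, heq b]
    · subst hbi
      simp only [priceKey]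
      rw [Prod.Lex.le_iff, Prod.Lex.le_iff]
      simp only [hup_i, hup_ne _ _ hai, ofLex_toLex]
      rw [hgt a, show (p a = x) ↔ (p a = y) from
        ⟨fun h => ((heq a).mp h.symm).symm, fun h => ((heq a).mpr h.symm).symm⟩]
    · rw [hkey_ne x y a hai, hkey_ne x y b hbi]
  have hrun_eq : ∀ x y : ℝ, (∀ j, cmp x (p j) = cmp y (p j)) → ∀ k : ℕ,
      greedyRun adj (priceKey (Function.update p i x)) k
        = greedyRun adj (priceKey (Function.update p i y)) k ∧
      greedyMatchU adj (priceKey (Function.update p i x)) k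
        = greedyMatchU adj (priceKey (Function.update p i y)) k :=
    fun x y h => greedyRun_matchU_congr (priceKey_injective _) (priceKey_injective _)
      (fun a b _ _ => horder x y h a b)
  -- measurable sets
  have hASold : MeasurableSet
      {x : ℝ | i ∈ greedyRun adj (priceKey (Function.update p i x)) n} := by
    apply measurableSet_of_cmp_invariant p
    intro x y h hx
    rw [← (hrun_eq x y h n).1]
    exact hx
  have hBv : ∀ v : Fin n, MeasurableSet {x : ℝ |
      greedyMatchU adj (priceKey (Function.update p i x)) ((M i : Fin n) : ℕ) = some v} := by
    intro v
    apply measurableSet_of_cmp_invariant p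
    intro x y h hx
    rw [← (hrun_eq x y h ((M i : Fin n) : ℕ)).2]
    exact hx
  -- the integrand as a function of the price x of item i
  set G : ℝ → ℝ := fun x =>
    (if i ∈ greedyRun adj (priceKey (Function.update p i x)) n then x else 0) +
      (greedyMatchU adj (priceKey (Function.update p i x)) ((M i : Fin n) : ℕ)).elim 0
        (fun v => 1 - Function.update p i x v) with hG
  have hint_eq : (fun w : ℝ =>
      revenue n adj (Function.update p i (Real.exp (w - 1))) i +
        utility n adj (Function.update p i (Real.exp (w - 1))) ((M i : Fin n) : ℕ))
      = fun w : ℝ => G (Real.exp (w - 1)) := by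
    funext w
    simp only [hG, revenue, utility, hup_i]
  have hGmeas : Measurable G := by
    rw [hG]
    apply Measurable.add
    · exact Measurable.ite hASold measurable_id measurable_const
    · have hrw : (fun x : ℝ =>
          (greedyMatchU adj (priceKey (Function.update p i x)) ((M i : Fin n) : ℕ)).elim 0
            (fun v => 1 - Function.update p i x v))
          = fun x : ℝ => ∑ v : Fin n,
              if greedyMatchU adj (priceKey (Function.update p i x)) ((M i : Fin n) : ℕ)
                = some v then 1 - Function.update p i x v else 0 := by
        funext x
        cases hmu : greedyMatchU adj (priceKey (Function.update p i x)) ((M i : Fin n) : ℕ) with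
        | none => simp
        | some v₀ => simp
      rw [hrw]
      apply Finset.measurable_sum
      intro v _
      refine Measurable.ite (hBv v) ?_ measurable_const
      by_cases hvi : v = i
      · have : (fun x : ℝ => 1 - Function.update p i x v) = fun x => 1 - x := by
          funext x; rw [hvi, hup_i]
        rw [this]
        exact measurable_const.sub measurable_id
      · have : (fun x : ℝ => 1 - Function.update p i x v) = fun _ => 1 - p v := by
          funext x; rw [hup_ne x v hvi]
        rw [this]
        exact measurable_const
  -- value bounds
  have h1e : (0:ℝ) < 1 / Real.exp 1 := by positivity
  have hUtil_bounds : ∀ x : ℝ, 0 < x → x ≤ 1 →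
      0 ≤ (greedyMatchU adj (priceKey (Function.update p i x)) ((M i : Fin n) : ℕ)).elim 0
          (fun v => 1 - Function.update p i x v) ∧
      (greedyMatchU adj (priceKey (Function.update p i x)) ((M i : Fin n) : ℕ)).elim 0
          (fun v => 1 - Function.update p i x v) ≤ 1 := by
    intro x hx0 hx1
    cases hmu : greedyMatchU adj (priceKey (Function.update p i x)) ((M i : Fin n) : ℕ) with
    | none => simp
    | some v =>
      simp only [Option.elim]
      by_cases hvi : v = i
      · rw [hvi, hup_i]; constructor <;> linarith
      · rw [hup_ne x v hvi]
        obtain ⟨ha, hb⟩ := hp1 v hvi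
        constructor <;> linarith
  have hG_bounds : ∀ x : ℝ, 0 < x → x ≤ 1 → 0 ≤ G x ∧ G x ≤ 2 := by
    intro x hx0 hx1
    obtain ⟨hu0, hu1⟩ := hUtil_bounds x hx0 hx1
    rw [hG]
    dsimp only
    split_ifs with h
    · constructor <;> linarith
    · constructor <;> linarith
  have hf_meas : Measurable fun w : ℝ => G (Real.exp (w - 1)) :=
    hGmeas.comp (Real.measurable_exp.comp (measurable_id.sub_const 1))
  have hInteg : IntervalIntegrable (fun w => G (Real.exp (w - 1)))
      MeasureTheory.volume 0 1 := by
    rw [intervalIntegrable_iff]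
    refine ⟨hf_meas.aestronglyMeasurable.restrict, ?_⟩
    haveI : MeasureTheory.IsFiniteMeasure (MeasureTheory.volume.restrict (Set.uIoc (0:ℝ) 1)) := by
      constructor
      rw [MeasureTheory.Measure.restrict_apply_univ, Set.uIoc_of_le (by norm_num : (0:ℝ) ≤ 1)]
      exact measure_Ioc_lt_top
    apply MeasureTheory.HasFiniteIntegral.of_bounded (C := 2)
    rw [MeasureTheory.ae_restrict_iff' measurableSet_uIoc]
    apply MeasureTheory.ae_of_all
    intro w hw
    rw [Set.uIoc_of_le (by norm_num : (0:ℝ) ≤ 1)] at hw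
    obtain ⟨hw0, hw1⟩ := hw
    have hx0 : 0 < Real.exp (w - 1) := Real.exp_pos _
    have hx1 : Real.exp (w - 1) ≤ 1 := by
      rw [Real.exp_le_one_iff]; linarith
    obtain ⟨hl, hu⟩ := hG_bounds _ hx0 hx1
    rw [Real.norm_eq_abs, abs_le]
    constructor <;> linarith
  -- down-closedness in the price of i
  have hdown : ∀ x y : ℝ, y < x →
      i ∈ greedyRun adj (priceKey (Function.update p i x)) n →
      i ∈ greedyRun adj (priceKey (Function.update p i y)) n := by
    intro x y hyx hx
    have hkey : priceKey (Function.update p i y) i < priceKey (Function.update p i x) i := by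
      simp only [priceKey]
      rw [Prod.Lex.lt_iff]
      left
      simp only [hup_i]
      exact hyx
    rcases greedyRun_lower_key (adj := adj) (priceKey_injective _) (priceKey_injective _)
      (fun a ha => hkey_ne x y a ha) hkey n with hEq | hMem
    · rw [← hEq]; exact hx
    · exact hMem
  -- dominance
  have hq1 : ∀ x : ℝ, x ≤ 1 → ∀ v, Function.update p i x v ≤ 1 := by
    intro x hx v
    by_cases hvi : v = i
    · rw [hvi, hup_i]; exact hx
    · rw [hup_ne x v hvi]; exact (hp1 v hvi).2
  have hdom : ∀ x : ℝ, x ≤ 1 →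
      ((greedyMatchU (fun j v => adj j v ∧ v ≠ i) (priceKey (Function.update p i x))
          ((M i : Fin n) : ℕ)).elim 0 (fun v => 1 - Function.update p i x v) : ℝ)
        ≤ (greedyMatchU adj (priceKey (Function.update p i x)) ((M i : Fin n) : ℕ)).elim 0
            (fun v => 1 - Function.update p i x v) :=
    fun x hx => dominance (priceKey_injective _) (hq1 x hx)
      (fun a b h => priceKey_mono h) _
  -- the run without item i does not depend on the price of i
  have hBind : ∀ x : ℝ,
      greedyMatchU (fun j v => adj j v ∧ v ≠ i) (priceKey (Function.update p i x))
          ((M i : Fin n) : ℕ)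
        = greedyMatchU (fun j v => adj j v ∧ v ≠ i) (priceKey p) ((M i : Fin n) : ℕ) := by
    intro x
    refine (greedyRun_matchU_congr (priceKey_injective _) (priceKey_injective _) ?_ _).2
    rintro a b ⟨ja, hja⟩ ⟨jb, hjb⟩
    rw [show priceKey (Function.update p i x) a = priceKey p a from by
        simp [priceKey, hup_ne x a hja.2],
      show priceKey (Function.update p i x) b = priceKey p b from by
        simp [priceKey, hup_ne x b hjb.2]]
  -- analysis when i remains unsold
  have hunsold : ∀ x : ℝ, i ∉ greedyRun adj (priceKey (Function.update p i x)) n →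
      ∃ v : Fin n, v ≠ i ∧ p v ≤ x ∧
        greedyMatchU (fun j v => adj j v ∧ v ≠ i) (priceKey p) ((M i : Fin n) : ℕ) = some v := by
    intro x hns
    have hiav : i ∉ greedyRun adj (priceKey (Function.update p i x)) ((M i : Fin n) : ℕ) :=
      fun h => hns (greedyRun_mono _ _ hm_lt.le h)
    cases hmu : greedyMatchU adj (priceKey (Function.update p i x)) ((M i : Fin n) : ℕ) with
    | none => exact absurd (matchU_eq_none_iff.mp hmu i hadji) hiav
    | some u =>
      obtain ⟨⟨hadju, hnu⟩, hmin⟩ := (matchU_eq_some_iff (priceKey_injective _)).mp hmu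
      have hui : u ≠ i := by
        intro h
        subst h
        exact hns (greedyRun_mono _ _ (Nat.succ_le_of_lt hm_lt) (mem_greedyRun_of_matchU hmu))
      have hple : p u ≤ x := by
        have := priceKey_mono (hmin i hadji hiav)
        rwa [hup_ne x u hui, hup_i] at this
      refine ⟨u, hui, hple, ?_⟩
      rw [← hBind x, ← unsold_matchU_eq (priceKey_injective _) hns hm_lt]
      exact hmu
  -- interval integrability and value of the indicator piece
  have hIndInteg : ∀ t : ℝ, IntervalIntegrable (fun w => if w < t then Real.exp (w - 1) else 0)
      MeasureTheory.volume 0 1 := by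
    intro t
    have hbase : IntervalIntegrable (fun w : ℝ => Real.exp (w - 1)) MeasureTheory.volume 0 1 :=
      (Real.continuous_exp.comp (continuous_id.sub continuous_const)).intervalIntegrable 0 1
    rw [intervalIntegrable_iff] at hbase ⊢
    have hrw : (fun w : ℝ => if w < t then Real.exp (w - 1) else 0)
        = Set.indicator (Set.Iio t) (fun w => Real.exp (w - 1)) := by
      funext w
      rw [Set.indicator_apply]
      simp [Set.mem_Iio]
    rw [hrw]
    exact hbase.indicator measurableSet_Iio
  have hIndVal : ∀ t : ℝ, 0 ≤ t → t ≤ 1 →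
      ∫ w in (0:ℝ)..1, (if w < t then Real.exp (w - 1) else 0)
        = Real.exp (t - 1) - Real.exp (0 - 1) := by
    intro t ht0 ht1
    have hi1 : IntervalIntegrable (fun w => if w < t then Real.exp (w - 1) else 0)
        MeasureTheory.volume 0 t := by
      apply (hIndInteg t).mono_set
      rw [Set.uIcc_of_le ht0, Set.uIcc_of_le (by norm_num : (0:ℝ) ≤ 1)]
      exact Set.Icc_subset_Icc le_rfl ht1
    have hi2 : IntervalIntegrable (fun w => if w < t then Real.exp (w - 1) else 0)
        MeasureTheory.volume t 1 := by
      apply (hIndInteg t).mono_set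
      rw [Set.uIcc_of_le ht1, Set.uIcc_of_le (by norm_num : (0:ℝ) ≤ 1)]
      exact Set.Icc_subset_Icc ht0 le_rfl
    rw [← intervalIntegral.integral_add_adjacent_intervals hi1 hi2]
    have h1 : ∫ w in (0:ℝ)..t, (if w < t then Real.exp (w - 1) else 0)
        = ∫ w in (0:ℝ)..t, Real.exp (w - 1) := by
      apply intervalIntegral.integral_congr_ae
      have hne : ∀ᵐ w : ℝ ∂MeasureTheory.volume, w ≠ t := by
        rw [MeasureTheory.ae_iff]
        have : {w : ℝ | ¬ w ≠ t} = {t} := by ext w; simp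
        rw [this]
        exact Real.volume_singleton
      filter_upwards [hne] with w hwne hw
      rw [Set.uIoc_of_le ht0] at hw
      rw [if_pos (lt_of_le_of_ne hw.2 hwne)]
    have h2 : ∫ w in t..(1:ℝ), (if w < t then Real.exp (w - 1) else 0) = 0 := by
      rw [intervalIntegral.integral_congr (g := fun _ => (0:ℝ)), intervalIntegral.integral_zero]
      intro w hw
      rw [Set.uIcc_of_le ht1] at hw
      exact if_neg (not_lt.mpr hw.1)
    have h3 : ∫ w in (0:ℝ)..t, Real.exp (w - 1) = Real.exp (t - 1) - Real.exp (0 - 1) := by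
      rw [intervalIntegral.integral_comp_sub_right (fun x => Real.exp x) 1, integral_exp]
    rw [h1, h2, h3, add_zero]
  have hexp01 : Real.exp (0 - 1) = 1 / Real.exp 1 := by
    rw [show (0:ℝ) - 1 = -1 by norm_num, Real.exp_neg, one_div]
  rw [hint_eq]
  by_cases hall : ∀ w ∈ Set.Ioo (0:ℝ) 1,
      i ∈ greedyRun adj (priceKey (Function.update p i (Real.exp (w - 1)))) n
  · -- Case (i): item i is (essentially) always sold
    have hlow : ∀ w ∈ Set.Icc (0:ℝ) 1,
        (if w < 1 then Real.exp (w - 1) else 0) ≤ G (Real.exp (w - 1)) := by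
      intro w hw
      obtain ⟨hw0, hw1⟩ := hw
      have hx1 : Real.exp (w - 1) ≤ 1 := by rw [Real.exp_le_one_iff]; linarith
      obtain ⟨hu0, _⟩ := hUtil_bounds (Real.exp (w - 1)) (Real.exp_pos _) hx1
      by_cases hlt : w < 1
      · rw [if_pos hlt]
        have hs : (w + 1) / 2 ∈ Set.Ioo (0:ℝ) 1 := by
          constructor <;> [linarith; linarith]
        have hsold : i ∈ greedyRun adj (priceKey (Function.update p i (Real.exp (w - 1)))) n :=
          hdown _ _ (Real.exp_lt_exp.mpr (by linarith)) (hall _ hs)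
        rw [hG]
        dsimp only
        rw [if_pos hsold]
        linarith
      · rw [if_neg hlt]
        exact (hG_bounds (Real.exp (w - 1)) (Real.exp_pos _) hx1).1
    have hmono := intervalIntegral.integral_mono_on (by norm_num : (0:ℝ) ≤ 1)
      (hIndInteg 1) hInteg hlow
    rw [hIndVal 1 (by norm_num) le_rfl] at hmono
    rw [show (1:ℝ) - 1 = 0 by norm_num, Real.exp_zero, hexp01] at hmono
    exact hmono
  · -- Case (ii): there is a price at which i remains unsold
    push_neg at hall
    obtain ⟨w0, hw0mem, hw0ns⟩ := hall
    obtain ⟨v, hvi, hpvw0, hvB⟩ := hunsold _ hw0ns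
    have hpvle : ∀ w' : ℝ,
        i ∉ greedyRun adj (priceKey (Function.update p i (Real.exp (w' - 1)))) n →
        p v ≤ Real.exp (w' - 1) := by
      intro w' hns
      obtain ⟨u, hui, hple, hB⟩ := hunsold _ hns
      have huv : u = v := Option.some.inj (hB.symm.trans hvB)
      rwa [huv] at hple
    have hUtilLB : ∀ x : ℝ, x ≤ 1 →
        1 - p v ≤ (greedyMatchU adj (priceKey (Function.update p i x))
            ((M i : Fin n) : ℕ)).elim 0 (fun u => 1 - Function.update p i x u) := by
      intro x hx
      refine le_trans ?_ (hdom x hx)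
      rw [hBind x, hvB]
      simp only [Option.elim]
      rw [hup_ne x v hvi]
    set Tset : Set ℝ := {w : ℝ | w ∈ Set.Ioo (0:ℝ) 1 ∧
        i ∈ greedyRun adj (priceKey (Function.update p i (Real.exp (w - 1)))) n} with hTset
    set t : ℝ := sSup Tset with htdef
    have hTsub : ∀ s ∈ Tset, s ≤ w0 := by
      intro s hs
      by_contra hgt
      push_neg at hgt
      exact hw0ns (hdown _ _ (Real.exp_lt_exp.mpr (by linarith)) hs.2)
    have ht_le : t ≤ w0 := Real.sSup_le hTsub hw0mem.1.le
    have ht0 : 0 ≤ t := Real.sSup_nonneg (fun s hs => hs.1.1.le)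
    have ht1 : t < 1 := lt_of_le_of_lt ht_le hw0mem.2
    have hsold_lt : ∀ w : ℝ, 0 ≤ w → w < t →
        i ∈ greedyRun adj (priceKey (Function.update p i (Real.exp (w - 1)))) n := by
      intro w hw0' hwt
      have hne : Tset.Nonempty := by
        by_contra hemp
        rw [Set.not_nonempty_iff_eq_empty] at hemp
        rw [htdef, hemp, Real.sSup_empty] at hwt
        linarith
      obtain ⟨s, hsT, hws⟩ := exists_lt_of_lt_csSup hne hwt
      exact hdown _ _ (Real.exp_lt_exp.mpr (by linarith)) hsT.2
    have hpv_le_t : p v ≤ Real.exp (t - 1) := by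
      have hbdd : BddAbove Tset := ⟨1, fun s hs => hs.1.2.le⟩
      have hev : ∀ θ ∈ Set.Ioo t 1, p v ≤ Real.exp (θ - 1) := by
        intro θ hθ
        apply hpvle
        intro hsold'
        have hθT : θ ≤ t := le_csSup hbdd ⟨⟨lt_of_le_of_lt ht0 hθ.1, hθ.2⟩, hsold'⟩
        linarith [hθ.1]
      refine ge_of_tendsto (f := fun θ : ℝ => Real.exp (θ - 1)) (x := nhdsWithin t (Set.Ioi t)) ?_ ?_
      · exact ((Real.continuous_exp.comp
          (continuous_id.sub continuous_const)).continuousAt).tendsto.mono_left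
          nhdsWithin_le_nhds
      · filter_upwards [Ioo_mem_nhdsGT_of_mem (Set.mem_Ico.mpr ⟨le_rfl, ht1⟩)] with θ hθ
          using hev θ hθ
    have hlow : ∀ w ∈ Set.Icc (0:ℝ) 1,
        (if w < t then Real.exp (w - 1) else 0) + (1 - p v) ≤ G (Real.exp (w - 1)) := by
      intro w hw
      obtain ⟨hw0', hw1⟩ := hw
      have hx1 : Real.exp (w - 1) ≤ 1 := by rw [Real.exp_le_one_iff]; linarith
      have hul := hUtilLB (Real.exp (w - 1)) hx1
      rw [hG]
      dsimp only
      by_cases hlt : w < t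
      · rw [if_pos hlt, if_pos (hsold_lt w hw0' hlt)]
        linarith
      · rw [if_neg hlt]
        split_ifs with h
        · linarith [Real.exp_pos (w - 1)]
        · linarith
    have hmono := intervalIntegral.integral_mono_on (by norm_num : (0:ℝ) ≤ 1)
      ((hIndInteg t).add intervalIntegrable_const) hInteg hlow
    have hsplit : ∫ w in (0:ℝ)..1, ((if w < t then Real.exp (w - 1) else 0) + (1 - p v))
        = (Real.exp (t - 1) - Real.exp (0 - 1)) + (1 - p v) := by
      rw [intervalIntegral.integral_add (hIndInteg t) intervalIntegrable_const,
        hIndVal t ht0 ht1.le, intervalIntegral.integral_const]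
      norm_num
    rw [hsplit, hexp01] at hmono
    linarith
end
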